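/- Let 𝔤 be a finite-dimensional real Lie algebra with an invariant inner product ⟨·,·⟩ (i.e. ⟨⁅z,x⁆,y⟩ + ⟨x,⁅z,y⁆⟩ = 0 for all x,y,z ∈ 𝔤). Let 𝔨 ⊆ 𝔤 be a Lie subalgebra and 𝔥 ⊆ 𝔨 an ideal of 𝔨; let 𝔪₀ be the orthogonal complement of 𝔥 in 𝔨, 𝔪′ the orthogonal complement of 𝔨 in 𝔤, and 𝔪 = 𝔪₀ ⊕ 𝔪′. Assume 𝔪′ is a nonzero irreducible 𝔨-module under the adjoint action, and assume neither 𝔥 nor 𝔪₀ is an ideal of 𝔤. Then a vector X ∈ 𝔪 satisfies ⁅X, v⁆ ∈ 𝔥 for all v ∈ 𝔪₀ if and only if X ∈ 𝔪₀ and ⁅X, v⁆ = 0 for all v ∈ 𝔪₀. -/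

import Mathlib

/-- With `𝔥 ⊆ 𝔨 ⊆ 𝔤`, `𝔥` an ideal of the subalgebra `𝔨`, `𝔪₀ = 𝔥ᗮ ∩ 𝔨`, `𝔪′ = 𝔨ᗮ`,
`𝔪 = 𝔪₀ ⊕ 𝔪′`, `𝔪′` a nonzero irreducible `𝔨`-module and neither `𝔥` nor `𝔪₀` an ideal
of `𝔤`: a vector `X ∈ 𝔪` satisfies `⁅X, 𝔪₀⁆ ⊆ 𝔥` if and only if `X ∈ 𝔪₀` and
`⁅X, 𝔪₀⁆ = 0`. -/
theorem bracket_mem_h_iff_mem_center_of_m0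
    {L : Type*} [LieRing L] [LieAlgebra ℝ L] [FiniteDimensional ℝ L]
    (B : L →ₗ[ℝ] L →ₗ[ℝ] ℝ)
    (hBsymm : ∀ x y : L, B x y = B y x)
    (hBpos : ∀ x : L, x ≠ 0 → 0 < B x x)
    (hBinv : ∀ x y z : L, B ⁅z, x⁆ y + B x ⁅z, y⁆ = 0)
    (𝔨 : Submodule ℝ L) (h𝔨 : ∀ x ∈ 𝔨, ∀ y ∈ 𝔨, ⁅x, y⁆ ∈ 𝔨)
    (𝔥 : Submodule ℝ L) (h𝔥𝔨 : 𝔥 ≤ 𝔨)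
    (h𝔥ideal : ∀ x ∈ 𝔨, ∀ y ∈ 𝔥, ⁅x, y⁆ ∈ 𝔥)
    (𝔪₀ : Submodule ℝ L)
    (h𝔪₀ : ∀ v : L, v ∈ 𝔪₀ ↔ v ∈ 𝔨 ∧ ∀ w ∈ 𝔥, B v w = 0)
    (𝔪' : Submodule ℝ L)
    (h𝔪' : ∀ v : L, v ∈ 𝔪' ↔ ∀ w ∈ 𝔨, B v w = 0)
    (𝔪 : Submodule ℝ L) (h𝔪 : 𝔪 = 𝔪₀ ⊔ 𝔪')
    (h𝔪'ne : 𝔪' ≠ ⊥)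
    (h𝔪'irr : ∀ W : Submodule ℝ L, W ≤ 𝔪' →
      (∀ x ∈ 𝔨, ∀ v ∈ W, ⁅x, v⁆ ∈ W) → W = ⊥ ∨ W = 𝔪')
    (h𝔥notideal : ¬ (∀ x : L, ∀ v ∈ 𝔥, ⁅x, v⁆ ∈ 𝔥))
    (h𝔪₀notideal : ¬ (∀ x : L, ∀ v ∈ 𝔪₀, ⁅x, v⁆ ∈ 𝔪₀)) :
    ∀ X ∈ 𝔪, ((∀ v ∈ 𝔪₀, ⁅X, v⁆ ∈ 𝔥) ↔ (X ∈ 𝔪₀ ∧ ∀ v ∈ 𝔪₀, ⁅X, v⁆ = 0)) := by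
  -- basic consequences
  have hzero : ∀ x : L, B x x = 0 → x = 0 := by
    intro x hx
    by_contra h
    exact (hBpos x h).ne' hx
  have h𝔪₀𝔨 : 𝔪₀ ≤ 𝔨 := fun v hv => ((h𝔪₀ v).1 hv).1
  -- 𝔨 ∩ 𝔪' = 0
  have hk_m' : ∀ w : L, w ∈ 𝔨 → w ∈ 𝔪' → w = 0 := fun w hk hm =>
    hzero w (((h𝔪' w).1 hm) w hk)
  -- 𝔥 ∩ 𝔪₀ = 0
  have hh_m0 : ∀ w : L, w ∈ 𝔥 → w ∈ 𝔪₀ → w = 0 := fun w hh hm =>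
    hzero w (((h𝔪₀ w).1 hm).2 w hh)
  -- ⁅𝔨, 𝔪'⁆ ⊆ 𝔪'
  have hbr_k_m' : ∀ x ∈ 𝔨, ∀ v ∈ 𝔪', ⁅x, v⁆ ∈ 𝔪' := by
    intro x hx v hv
    rw [h𝔪']
    intro w hw
    have h1 : B ⁅x, v⁆ w = - B v ⁅x, w⁆ := by linarith [hBinv v w x]
    rw [h1, (h𝔪' v).1 hv _ (h𝔨 x hx w hw), neg_zero]
  -- ⁅𝔨, 𝔪₀⁆ ⊆ 𝔪₀
  have hbr_k_m0 : ∀ x ∈ 𝔨, ∀ v ∈ 𝔪₀, ⁅x, v⁆ ∈ 𝔪₀ := by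
    intro x hx v hv
    obtain ⟨hvk, hvh⟩ := (h𝔪₀ v).1 hv
    rw [h𝔪₀]
    refine ⟨h𝔨 x hx v hvk, fun w hw => ?_⟩
    have h1 : B ⁅x, v⁆ w = - B v ⁅x, w⁆ := by linarith [hBinv v w x]
    rw [h1, hvh _ (h𝔥ideal x hx w hw), neg_zero]
  -- decomposition L = 𝔨 ⊔ 𝔪'
  have hrefl : B.IsRefl := fun x y h => by rw [hBsymm]; exact h
  have hnd : (LinearMap.BilinForm.restrict B 𝔨).Nondegenerate := by
    constructor <;>
    · intro x hx
      have h1 := hx x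
      simp only [LinearMap.BilinForm.restrict_apply] at h1
      exact Subtype.ext (hzero _ h1)
  have hcompl := LinearMap.BilinForm.isCompl_orthogonal_of_restrict_nondegenerate
    (B := B) (W := 𝔨) hrefl hnd
  have horth : LinearMap.BilinForm.orthogonal B 𝔨 = 𝔪' := by
    ext x
    rw [LinearMap.BilinForm.mem_orthogonal_iff, h𝔪']
    constructor
    · intro h w hw
      rw [hBsymm]
      exact h w hw
    · intro h w hw
      have := h w hw
      rw [hBsymm] at this
      exact this
  have hsup : 𝔨 ⊔ 𝔪' = ⊤ := by rw [← horth]; exact hcompl.sup_eq_top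
  -- main proof
  intro X hX
  constructor
  · intro hbr
    rw [h𝔪] at hX
    obtain ⟨X₀, hX₀, X', hX', rfl⟩ := Submodule.mem_sup.1 hX
    have key : ∀ v ∈ 𝔪₀, ⁅X', v⁆ = 0 ∧ ⁅X₀, v⁆ = 0 := by
      intro v hv
      have h1 : ⁅X₀, v⁆ ∈ 𝔪₀ := hbr_k_m0 X₀ (h𝔪₀𝔨 hX₀) v hv
      have h2 : ⁅X', v⁆ ∈ 𝔪' := by
        have h3 : ⁅v, X'⁆ ∈ 𝔪' := hbr_k_m' v (h𝔪₀𝔨 hv) X' hX'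
        rw [← lie_skew]
        exact neg_mem h3
      have hsum := hbr v hv
      rw [add_lie] at hsum
      have h3 : ⁅X', v⁆ ∈ 𝔨 := by
        have h4 : ⁅X', v⁆ = (⁅X₀, v⁆ + ⁅X', v⁆) - ⁅X₀, v⁆ := by abel
        rw [h4]
        exact sub_mem (h𝔥𝔨 hsum) (h𝔪₀𝔨 h1)
      have h4 : ⁅X', v⁆ = 0 := hk_m' _ h3 h2
      rw [h4, add_zero] at hsum
      exact ⟨h4, hh_m0 _ hsum h1⟩
    have hX'0 : X' = 0 := by
      by_contra hne
      -- centralizer of 𝔪₀ in 𝔪'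
      let W : Submodule ℝ L :=
        { carrier := {w | w ∈ 𝔪' ∧ ∀ v ∈ 𝔪₀, ⁅v, w⁆ = 0}
          add_mem' := fun ha hb => ⟨add_mem ha.1 hb.1, fun v hv => by
            rw [lie_add, ha.2 v hv, hb.2 v hv, add_zero]⟩
          zero_mem' := ⟨zero_mem _, fun v _ => lie_zero v⟩
          smul_mem' := fun c x hx => ⟨Submodule.smul_mem _ c hx.1, fun v hv => by
            rw [lie_smul, hx.2 v hv, smul_zero]⟩ }
      have hWle : W ≤ 𝔪' := fun w hw => hw.1
      have hWinv : ∀ x ∈ 𝔨, ∀ w ∈ W, ⁅x, w⁆ ∈ W := by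
        intro x hx w hw
        refine ⟨hbr_k_m' x hx w hw.1, fun v hv => ?_⟩
        have h1 : ⁅v, ⁅x, w⁆⁆ = ⁅⁅v, x⁆, w⁆ + ⁅x, ⁅v, w⁆⁆ := leibniz_lie v x w
        have h2 : ⁅v, x⁆ ∈ 𝔪₀ := by
          rw [← lie_skew]
          exact neg_mem (hbr_k_m0 x hx v hv)
        rw [h1, hw.2 _ h2, hw.2 v hv, lie_zero, add_zero]
      have hX'W : X' ∈ W := by
        refine ⟨hX', fun v hv => ?_⟩
        rw [← lie_skew, (key v hv).1, neg_zero]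
      have hWne : W ≠ ⊥ := by
        intro h
        rw [h, Submodule.mem_bot] at hX'W
        exact hne hX'W
      have hWeq : W = 𝔪' := (h𝔪'irr W hWle hWinv).resolve_left hWne
      apply h𝔪₀notideal
      intro x v hv
      have hx : x ∈ 𝔨 ⊔ 𝔪' := by rw [hsup]; trivial
      obtain ⟨k, hk, m, hm, rfl⟩ := Submodule.mem_sup.1 hx
      rw [add_lie]
      have h2 : ⁅m, v⁆ = 0 := by
        have hmW : m ∈ W := hWeq ▸ hm
        rw [← lie_skew, hmW.2 v hv, neg_zero]
      rw [h2, add_zero]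
      exact hbr_k_m0 k hk v hv
    rw [hX'0, add_zero]
    exact ⟨hX₀, fun v hv => (key v hv).2⟩
  · rintro ⟨_, hc⟩ v hv
    rw [hc v hv]
    exact zero_mem 𝔥
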